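/- Let V be a Banach space densely and continuously embedded in a Banach space E, P a metric space, and {A^{(μ)}(t)}_{t≥0}, μ∈P, families satisfying the hyperbolic conditions (Hyp1)–(Hyp3) with constants M, ω, M_V, ω_V independent of μ; let {R^{(μ)}(t,s)}_{t≥s≥0} be the evolution systems determined by these families (the unique evolution systems satisfying the exponential bound M e^{ω(t−s)} and the forward/backward differential identities on V). If for every μ∈P and T>0 one has lim_{ν→μ} ∫₀^T ‖A^{(ν)}(r) − A^{(μ)}(r)‖_{L(V,E)} dr = 0, then the family {R^{(μ)}}_{μ∈P} is continuous: for every ū∈E, every μ∈P and every sequence μ_n → μ in P, R^{(μ_n)}(t,s)ū → R^{(μ)}(t,s)ū, uniformly with respect to t≥s≥0 from bounded intervals. -/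

import Mathlib

open MeasureTheory Filter Set Topology

/-- An evolution system on a Banach space `E`. -/
def IsEvolutionSystem {E : Type*} [NormedAddCommGroup E] [NormedSpace ℝ E]
    (R : ℝ → ℝ → E →L[ℝ] E) : Prop :=
  (∀ t : ℝ, 0 ≤ t → R t t = ContinuousLinearMap.id ℝ E) ∧
  (∀ t s r : ℝ, 0 ≤ r → r ≤ s → s ≤ t → (R t s).comp (R s r) = R t r) ∧
  (∀ u : E, ContinuousOn (fun p : ℝ × ℝ => R p.1 p.2 u) {p : ℝ × ℝ | 0 ≤ p.2 ∧ p.2 ≤ p.1})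

/-- A `C₀` semigroup of bounded linear operators on `E`. -/
def IsC0Semigroup {E : Type*} [NormedAddCommGroup E] [NormedSpace ℝ E]
    (S : ℝ → E →L[ℝ] E) : Prop :=
  S 0 = ContinuousLinearMap.id ℝ E ∧
  (∀ t s : ℝ, 0 ≤ t → 0 ≤ s → S (t + s) = (S t).comp (S s)) ∧
  (∀ u : E, ContinuousOn (fun t : ℝ => S t u) (Set.Ici 0))

/-- The composition `S(t_{n-1})(s_{n-1}) ∘ ⋯ ∘ S(t_0)(s_0)` of members of a two-parameter
family of operators. -/
def prodOps {E : Type*} [NormedAddCommGroup E] [NormedSpace ℝ E]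
    (S : ℝ → ℝ → E →L[ℝ] E) (t s : ℕ → ℝ) : ℕ → E →L[ℝ] E
  | 0 => ContinuousLinearMap.id ℝ E
  | n + 1 => (S (t n) (s n)).comp (prodOps S t s n)

/-- Stability of a family `{S(t)}_{t ≥ 0}` of semigroups with constants `M`, `ω`:
`‖S(tₙ)(sₙ) ⋯ S(t₁)(s₁)‖ ≤ M e^{ω(s₁+⋯+sₙ)}` for `0 ≤ t₁ ≤ ⋯ ≤ tₙ` and `sᵢ ≥ 0`. -/
def IsStableFamily {E : Type*} [NormedAddCommGroup E] [NormedSpace ℝ E]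
    (S : ℝ → ℝ → E →L[ℝ] E) (M ω : ℝ) : Prop :=
  ∀ (n : ℕ) (t s : ℕ → ℝ), (∀ i, 0 ≤ t i) → (∀ i j, i ≤ j → t i ≤ t j) → (∀ i, 0 ≤ s i) →
    ‖prodOps S t s n‖ ≤ M * Real.exp (ω * ∑ i ∈ Finset.range n, s i)

/-- The hyperbolic (Kato) conditions (Hyp1)–(Hyp3) for a family `{A(t)}_{t≥0}` of generators,
relative to a continuous dense embedding `ι : V → E`. Here `S t` is the `C₀` semigroup on `E`
generated by `A(t)`, `SV t` is its restriction to `V` (admissibility), and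
`A t : V →L[ℝ] E` is the restriction of `A(t)` to `V` (so that `V ⊆ D(A(t))`). -/
structure IsHyperbolicFamily {V E : Type*}
    [NormedAddCommGroup V] [NormedSpace ℝ V]
    [NormedAddCommGroup E] [NormedSpace ℝ E]
    (iota : V →L[ℝ] E) (A : ℝ → (V →L[ℝ] E))
    (S : ℝ → ℝ → E →L[ℝ] E) (SV : ℝ → ℝ → V →L[ℝ] V)
    (M om MV omV : ℝ) : Prop where
  /-- (Hyp1): each `S t` is a `C₀` semigroup on `E`. -/
  sem_E : ∀ t : ℝ, 0 ≤ t → IsC0Semigroup (S t)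
  /-- (Hyp1)/(Hyp3): `A(t)v` is the generator of `S t` applied to `v ∈ V`. -/
  gen_on_V : ∀ t : ℝ, 0 ≤ t → ∀ v : V,
    Filter.Tendsto (fun h : ℝ => h⁻¹ • (S t h (iota v) - iota v)) (nhdsWithin 0 (Set.Ioi 0))
      (nhds (A t v))
  /-- (Hyp1): stability on `E` with constants `M`, `ω`. -/
  stable_E : IsStableFamily S M om
  /-- (Hyp2): each restricted semigroup `SV t` is a `C₀` semigroup on `V`. -/
  sem_V : ∀ t : ℝ, 0 ≤ t → IsC0Semigroup (SV t)
  /-- (Hyp2): `V` is `A(t)`-admissible, `SV t` being the restriction of `S t` to `V`. -/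
  compat : ∀ t h : ℝ, 0 ≤ t → 0 ≤ h → ∀ v : V, iota (SV t h v) = S t h (iota v)
  /-- (Hyp2): stability on `V` with constants `M_V`, `ω_V`. -/
  stable_V : IsStableFamily SV MV omV
  /-- (Hyp3): `t ↦ A(t) ∈ L(V,E)` is norm continuous on `[0,∞)`. -/
  contA : ContinuousOn A (Set.Ici 0)

/-- `R` is the evolution system determined by the hyperbolic family `{A(t)}` (with
restriction data `ι`, constants `M`, `ω`): an evolution system satisfying the exponential
bound, the forward derivative identity at `t = s` and the backward derivative identity
on `V`. -/
def IsDeterminedEvolutionSystem {V E : Type*}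
    [NormedAddCommGroup V] [NormedSpace ℝ V]
    [NormedAddCommGroup E] [NormedSpace ℝ E]
    (iota : V →L[ℝ] E) (A : ℝ → (V →L[ℝ] E)) (M om : ℝ)
    (R : ℝ → ℝ → E →L[ℝ] E) : Prop :=
  IsEvolutionSystem R ∧
  (∀ t s : ℝ, 0 ≤ s → s ≤ t → ‖R t s‖ ≤ M * Real.exp (om * (t - s))) ∧
  (∀ s : ℝ, 0 ≤ s → ∀ v : V,
    Filter.Tendsto (fun h : ℝ => h⁻¹ • (R (s + h) s (iota v) - iota v))
      (nhdsWithin 0 (Set.Ioi 0)) (nhds (A s v))) ∧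
  (∀ t : ℝ, ∀ v : V, ∀ s ∈ Set.Icc (0:ℝ) t,
    HasDerivWithinAt (fun σ : ℝ => R t σ (iota v)) (-(R t s (A s v))) (Set.Icc 0 t) s)

section Helpers

variable {V E : Type*} [NormedAddCommGroup V] [NormedSpace ℝ V]
  [NormedAddCommGroup E] [NormedSpace ℝ E]

lemma tendsto_apply_of {l : Filter ℝ} {Rt : ℝ → E →L[ℝ] E} {c : ℝ → E} {c0 y : E} {C : ℝ}
    (hb : ∀ᶠ σ in l, ‖Rt σ‖ ≤ C)
    (hc : Tendsto c l (𝓝 c0))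
    (hR : Tendsto (fun σ => Rt σ c0) l (𝓝 y)) :
    Tendsto (fun σ => Rt σ (c σ)) l (𝓝 y) := by
  have key : Tendsto (fun σ => Rt σ (c σ - c0)) l (𝓝 0) := by
    apply squeeze_zero_norm' (hb.mono fun σ h => ?_)
    · have : Tendsto (fun σ => C * ‖c σ - c0‖) l (𝓝 (C * ‖c0 - c0‖)) :=
        (tendsto_const_nhds.mul ((hc.sub tendsto_const_nhds).norm))
      simpa using this
    · exact le_trans ((Rt σ).le_opNorm _) (mul_le_mul_of_nonneg_right h (norm_nonneg _))
  have : Tendsto (fun σ => Rt σ (c σ - c0) + Rt σ c0) l (𝓝 (0 + y)) := key.add hR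
  simpa using this

lemma key_interval
    (iota : V →L[ℝ] E)
    (Anu Amu : ℝ → (V →L[ℝ] E)) (hAnu : Continuous Anu) (hAmu : Continuous Amu)
    (Smu : ℝ → E →L[ℝ] E) (SVmu : ℝ → V →L[ℝ] V)
    (Rnu : ℝ → ℝ → E →L[ℝ] E)
    {CE K : ℝ} (hCE : 0 ≤ CE)
    {t a b : ℝ} (ha : 0 ≤ a) (hab : a ≤ b) (hbt : b ≤ t)
    (hRcomp : ∀ t' s' r' : ℝ, 0 ≤ r' → r' ≤ s' → s' ≤ t' →
      (Rnu t' s').comp (Rnu s' r') = Rnu t' r')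
    (hRcont : ∀ u : E, ContinuousOn (fun p : ℝ × ℝ => Rnu p.1 p.2 u)
      {p : ℝ × ℝ | 0 ≤ p.2 ∧ p.2 ≤ p.1})
    (hRb : ∀ σ : ℝ, 0 ≤ σ → σ ≤ t → ‖Rnu t σ‖ ≤ CE)
    (hfwd : ∀ s : ℝ, 0 ≤ s → ∀ v : V,
      Tendsto (fun h : ℝ => h⁻¹ • (Rnu (s + h) s (iota v) - iota v)) (𝓝[>] (0:ℝ))
        (𝓝 (Anu s v)))
    (hgen : ∀ v : V, Tendsto (fun h : ℝ => h⁻¹ • (Smu h (iota v) - iota v)) (𝓝[>] (0:ℝ))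
        (𝓝 (Amu a v)))
    (hScont : ∀ u : E, ContinuousOn (fun h => Smu h u) (Ici 0))
    (hSadd : ∀ h k : ℝ, 0 ≤ h → 0 ≤ k → Smu (h + k) = (Smu h).comp (Smu k))
    (hSV0 : SVmu 0 = ContinuousLinearMap.id ℝ V)
    (hcompat : ∀ h : ℝ, 0 ≤ h → ∀ v : V, iota (SVmu h v) = Smu h (iota v))
    (w : V) (hw : ∀ σ ∈ Icc a b, ‖SVmu (σ - a) w‖ ≤ K) :
    ‖Rnu t b (iota (SVmu (b - a) w)) - Rnu t a (iota w)‖ ≤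
      ∫ σ in a..b, CE * ((‖Amu a - Amu σ‖ + ‖Amu σ - Anu σ‖) * K) := by
  set y : ℝ → V := fun σ => SVmu (σ - a) w with hy
  set φ : ℝ → E := fun σ => Rnu t σ (iota (y σ)) with hφ
  set g : ℝ → ℝ := fun σ => CE * ((‖Amu a - Amu σ‖ + ‖Amu σ - Anu σ‖) * K) with hg
  have hgc : Continuous g := by
    apply continuous_const.mul
    exact (((continuous_const.sub hAmu).norm.add ((hAmu.sub hAnu).norm)).mul continuous_const)
  set B : ℝ → ℝ := fun σ => ∫ r in a..σ, g r with hB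
  -- basic facts
  have hiy : ∀ σ : ℝ, a ≤ σ → iota (y σ) = Smu (σ - a) (iota w) :=
    fun σ hσ => hcompat (σ - a) (by linarith) w
  have hya : y a = w := by simp [hy, hSV0]
  have hφa : φ a = Rnu t a (iota w) := by simp [hφ, hya]
  -- continuity of φ on Icc a b
  have hcont_iy : ContinuousOn (fun σ => iota (y σ)) (Icc a b) := by
    have h1 : ContinuousOn (fun σ => Smu (σ - a) (iota w)) (Icc a b) := by
      apply (hScont (iota w)).comp (continuous_id.sub continuous_const).continuousOn
      intro σ hσ; exact sub_nonneg.2 hσ.1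
    exact h1.congr fun σ hσ => hiy σ hσ.1
  have hφcont : ContinuousOn φ (Icc a b) := by
    intro σ0 hσ0
    apply tendsto_apply_of (C := CE)
    · exact eventually_mem_nhdsWithin.mono fun σ hσ => hRb σ (le_trans ha hσ.1) (le_trans hσ.2 hbt)
    · exact hcont_iy σ0 hσ0
    · have hmap : Tendsto (fun σ : ℝ => ((t, σ) : ℝ × ℝ)) (𝓝[Icc a b] σ0)
          (𝓝[{p : ℝ × ℝ | 0 ≤ p.2 ∧ p.2 ≤ p.1}] (t, σ0)) := by
        rw [tendsto_nhdsWithin_iff]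
        constructor
        · exact ((continuous_const.prodMk continuous_id).tendsto σ0).mono_left nhdsWithin_le_nhds
        · exact eventually_mem_nhdsWithin.mono fun σ hσ =>
            ⟨le_trans ha hσ.1, le_trans hσ.2 hbt⟩
      exact Filter.Tendsto.comp (hRcont (iota (y σ0)) (t, σ0) ⟨le_trans ha hσ0.1, le_trans hσ0.2 hbt⟩) hmap
  -- the right derivative of φ
  have hder : ∀ x ∈ Ico a b, HasDerivWithinAt φ
      (Rnu t x (Amu a (y x) - Anu x (y x))) (Ici x) x := by
    intro x hx
    rw [hasDerivWithinAt_iff_tendsto_slope]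
    rw [show Ici x \ {x} = Ioi x from Set.Ici_sdiff_left]
    set c : ℝ → E := fun σ' => (σ' - x)⁻¹ • (Smu (σ' - x) (iota (y x)) - iota (y x)) -
      (σ' - x)⁻¹ • (Rnu σ' x (iota (y x)) - iota (y x)) with hc
    have hxb : x < b := hx.2
    have hx0 : 0 ≤ x := le_trans ha hx.1
    have hIoo : Ioo x b ∈ 𝓝[>] x := Ioo_mem_nhdsGT_of_mem ⟨le_refl x, hxb⟩
    have heq : ∀ σ' ∈ Ioo x b, Rnu t σ' (c σ') = slope φ x σ' := by
      intro σ' hσ'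
      have hσx : x ≤ σ' := le_of_lt hσ'.1
      have hσt : σ' ≤ t := le_trans (le_of_lt hσ'.2) hbt
      have hax : a ≤ x := hx.1
      have e1 : (0:ℝ) ≤ σ' - x := by linarith
      have e2 : (0:ℝ) ≤ x - a := by linarith
      have h1 : iota (y σ') = Smu (σ' - x) (iota (y x)) := by
        have hadd := hSadd (σ' - x) (x - a) e1 e2
        rw [hiy σ' (le_trans hx.1 hσx), hiy x hx.1,
          show σ' - a = (σ' - x) + (x - a) by ring, hadd]
        rfl
      have h2 : Rnu t x (iota (y x)) = Rnu t σ' (Rnu σ' x (iota (y x))) := by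
        rw [← hRcomp t σ' x hx0 hσx hσt]; rfl
      have hslope : slope φ x σ' = (σ' - x)⁻¹ • (φ σ' - φ x) := slope_def_module φ x σ'
      rw [hslope]
      show Rnu t σ' ((σ' - x)⁻¹ • (Smu (σ' - x) (iota (y x)) - iota (y x)) -
        (σ' - x)⁻¹ • (Rnu σ' x (iota (y x)) - iota (y x))) =
        (σ' - x)⁻¹ • (Rnu t σ' (iota (y σ')) - Rnu t x (iota (y x)))
      rw [h2, ← h1, map_sub, _root_.map_smul, _root_.map_smul, map_sub, map_sub]
      module
    have hcc : Tendsto c (𝓝[>] x) (𝓝 (Amu a (y x) - Anu x (y x))) := by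
      have hmap0 : Tendsto (fun σ' : ℝ => σ' - x) (𝓝[>] x) (𝓝[>] (0:ℝ)) := by
        rw [tendsto_nhdsWithin_iff]
        constructor
        · have h0 : Tendsto (fun σ' : ℝ => σ' - x) (𝓝 x) (𝓝 (x - x)) :=
            (continuous_id.sub continuous_const).tendsto x
          rw [sub_self] at h0
          exact h0.mono_left nhdsWithin_le_nhds
        · exact eventually_mem_nhdsWithin.mono fun σ' hσ' => Set.mem_Ioi.2 (sub_pos.2 hσ')
      have hc1 : Tendsto (fun σ' : ℝ => (σ' - x)⁻¹ • (Smu (σ' - x) (iota (y x)) - iota (y x)))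
          (𝓝[>] x) (𝓝 (Amu a (y x))) := (hgen (y x)).comp hmap0
      have hc2 : Tendsto (fun σ' : ℝ => (σ' - x)⁻¹ • (Rnu σ' x (iota (y x)) - iota (y x)))
          (𝓝[>] x) (𝓝 (Anu x (y x))) := by
        have := (hfwd x hx0 (y x)).comp hmap0
        apply this.congr
        intro σ'
        simp
      exact hc1.sub hc2
    have hRlim : Tendsto (fun σ' : ℝ => Rnu t σ' (Amu a (y x) - Anu x (y x))) (𝓝[>] x)
        (𝓝 (Rnu t x (Amu a (y x) - Anu x (y x)))) := by
      have hmap : Tendsto (fun σ : ℝ => ((t, σ) : ℝ × ℝ)) (𝓝[>] x)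
          (𝓝[{p : ℝ × ℝ | 0 ≤ p.2 ∧ p.2 ≤ p.1}] (t, x)) := by
        rw [tendsto_nhdsWithin_iff]
        constructor
        · exact ((continuous_const.prodMk continuous_id).tendsto x).mono_left nhdsWithin_le_nhds
        · exact eventually_of_mem hIoo fun σ hσ => ⟨le_trans hx0 (le_of_lt hσ.1),
            le_trans (le_of_lt hσ.2) hbt⟩
      exact Filter.Tendsto.comp (hRcont _ (t, x) ⟨hx0, le_trans (le_of_lt hxb) hbt⟩) hmap
    have hmain : Tendsto (fun σ' => Rnu t σ' (c σ')) (𝓝[>] x)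
        (𝓝 (Rnu t x (Amu a (y x) - Anu x (y x)))) := by
      apply tendsto_apply_of (C := CE) ?_ hcc hRlim
      exact eventually_of_mem hIoo fun σ hσ => hRb σ (le_trans hx0 (le_of_lt hσ.1))
        (le_trans (le_of_lt hσ.2) hbt)
    exact hmain.congr' (eventuallyEq_of_mem hIoo heq)
  -- derivative of the boundary function B
  have hBd : ∀ x : ℝ, HasDerivAt B (g x) x := fun x =>
    intervalIntegral.integral_hasDerivAt_right (hgc.intervalIntegrable a x)
      hgc.stronglyMeasurable.stronglyMeasurableAtFilter hgc.continuousAt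
  -- the bound on the derivative
  have hbound : ∀ x ∈ Ico a b, ‖Rnu t x (Amu a (y x) - Anu x (y x))‖ ≤ g x := by
    intro x hx
    have hx0 : 0 ≤ x := le_trans ha hx.1
    have hKx : ‖y x‖ ≤ K := hw x ⟨hx.1, le_of_lt hx.2⟩
    have h1 : ‖Rnu t x (Amu a (y x) - Anu x (y x))‖ ≤
        CE * ‖Amu a (y x) - Anu x (y x)‖ := by
      refine le_trans ((Rnu t x).le_opNorm _) ?_
      exact mul_le_mul_of_nonneg_right (hRb x hx0 (le_trans (le_of_lt hx.2) hbt)) (norm_nonneg _)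
    have h2 : ‖Amu a (y x) - Anu x (y x)‖ ≤ (‖Amu a - Amu x‖ + ‖Amu x - Anu x‖) * K := by
      have : Amu a (y x) - Anu x (y x) = (Amu a - Anu x) (y x) := by simp
      rw [this]
      refine le_trans ((Amu a - Anu x).le_opNorm _) ?_
      have hop : ‖Amu a - Anu x‖ ≤ ‖Amu a - Amu x‖ + ‖Amu x - Anu x‖ := by
        simpa using norm_sub_le_norm_sub_add_norm_sub (Amu a) (Amu x) (Anu x)
      exact mul_le_mul hop hKx (norm_nonneg _) (by positivity)
    calc ‖Rnu t x (Amu a (y x) - Anu x (y x))‖ ≤ CE * ‖Amu a (y x) - Anu x (y x)‖ := h1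
      _ ≤ CE * ((‖Amu a - Amu x‖ + ‖Amu x - Anu x‖) * K) :=
        mul_le_mul_of_nonneg_left h2 hCE
      _ = g x := rfl
  -- apply the fencing theorem
  have hfa : ‖(fun σ => φ σ - φ a) a‖ ≤ B a := by simp [hB]
  have key := image_norm_le_of_norm_deriv_right_le_deriv_boundary
    (f := fun σ => φ σ - φ a) (f' := fun x => Rnu t x (Amu a (y x) - Anu x (y x)))
    (hφcont.sub continuousOn_const)
    (fun x hx => (hder x hx).sub_const _) hfa hBd hbound
  have := key (right_mem_Icc.2 hab)
  simpa [hφa, norm_sub_rev] using this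

lemma prodOps_congr (S : ℝ → ℝ → E →L[ℝ] E) (t s s' : ℕ → ℝ) (n : ℕ)
    (h : ∀ j, j < n → s j = s' j) : prodOps S t s n = prodOps S t s' n := by
  induction n with
  | zero => rfl
  | succ n ih =>
    rw [prodOps, prodOps, h n (by omega), ih (fun j hj => h j (by omega))]


end Helpers

set_option maxHeartbeats 2000000 in
/-- Proposition 3.2(ii): if `∫₀ᵀ ‖A^{(ν)}(r) − A^{(μ)}(r)‖ dr → 0` as `ν → μ`, then the
family of determined evolution systems is continuous: `R^{(μₙ)}(t,s)ū → R^{(μ)}(t,s)ū`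
uniformly with respect to `t ≥ s ≥ 0` from bounded intervals. -/
theorem hyperbolic_evolution_systems_continuity
    {V E : Type*} [NormedAddCommGroup V] [NormedSpace ℝ V] [CompleteSpace V]
    [NormedAddCommGroup E] [NormedSpace ℝ E] [CompleteSpace E]
    {P : Type*} [MetricSpace P]
    (iota : V →L[ℝ] E) (hinj : Function.Injective iota) (hdense : DenseRange iota)
    (A : P → ℝ → (V →L[ℝ] E)) (S : P → ℝ → ℝ → E →L[ℝ] E) (SV : P → ℝ → ℝ → V →L[ℝ] V)
    (M om MV omV : ℝ) (hM : 1 ≤ M) (hMV : 1 ≤ MV)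
    (hhyp : ∀ μ : P, IsHyperbolicFamily iota (A μ) (S μ) (SV μ) M om MV omV)
    (R : P → ℝ → ℝ → E →L[ℝ] E)
    (hdet : ∀ μ : P, IsDeterminedEvolutionSystem iota (A μ) M om (R μ))
    (hconv : ∀ (μ : P) (T : ℝ), 0 < T →
      Tendsto (fun ν : P => ∫ r in (0:ℝ)..T, ‖A ν r - A μ r‖) (𝓝 μ) (𝓝 0)) :
    ∀ (u0 : E) (μ : P) (μn : ℕ → P), Tendsto μn atTop (𝓝 μ) →
      ∀ T : ℝ, 0 < T → ∀ ε > (0:ℝ), ∃ N : ℕ, ∀ n ≥ N, ∀ t s : ℝ,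
        0 ≤ s → s ≤ t → t ≤ T → ‖R (μn n) t s u0 - R μ t s u0‖ ≤ ε := by
  have hsemE : ∀ μ' : P, ∀ t : ℝ, 0 ≤ t →
      (S μ' t 0 = ContinuousLinearMap.id ℝ E ∧
      (∀ a b : ℝ, 0 ≤ a → 0 ≤ b → S μ' t (a + b) = (S μ' t a).comp (S μ' t b)) ∧
      (∀ u : E, ContinuousOn (fun h : ℝ => S μ' t h u) (Set.Ici 0))) :=
    fun μ' t ht => (hhyp μ').sem_E t ht
  have hgenV : ∀ μ' : P, ∀ t : ℝ, 0 ≤ t → ∀ v : V,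
      Filter.Tendsto (fun h : ℝ => h⁻¹ • (S μ' t h (iota v) - iota v)) (𝓝[>] (0:ℝ))
        (𝓝 (A μ' t v)) := fun μ' => (hhyp μ').gen_on_V
  have hsemV : ∀ μ' : P, ∀ t : ℝ, 0 ≤ t → SV μ' t 0 = ContinuousLinearMap.id ℝ V :=
    fun μ' t ht => ((hhyp μ').sem_V t ht).1
  have hcompat : ∀ μ' : P, ∀ t h : ℝ, 0 ≤ t → 0 ≤ h → ∀ v : V,
      iota (SV μ' t h v) = S μ' t h (iota v) := fun μ' => (hhyp μ').compat
  have hstableV : ∀ μ' : P, ∀ (n : ℕ) (t s : ℕ → ℝ), (∀ i, 0 ≤ t i) →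
      (∀ i j, i ≤ j → t i ≤ t j) → (∀ i, 0 ≤ s i) →
      ‖prodOps (SV μ') t s n‖ ≤ MV * Real.exp (omV * ∑ i ∈ Finset.range n, s i) :=
    fun μ' => (hhyp μ').stable_V
  have hcontA : ∀ μ' : P, ContinuousOn (A μ') (Set.Ici 0) := fun μ' => (hhyp μ').contA
  have hRid : ∀ μ' : P, ∀ t : ℝ, 0 ≤ t → R μ' t t = ContinuousLinearMap.id ℝ E :=
    fun μ' => ((hdet μ').1).1
  have hRcomp : ∀ μ' : P, ∀ t s r : ℝ, 0 ≤ r → r ≤ s → s ≤ t →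
      (R μ' t s).comp (R μ' s r) = R μ' t r := fun μ' => ((hdet μ').1).2.1
  have hRcont : ∀ μ' : P, ∀ u : E, ContinuousOn (fun p : ℝ × ℝ => R μ' p.1 p.2 u)
      {p : ℝ × ℝ | 0 ≤ p.2 ∧ p.2 ≤ p.1} := fun μ' => ((hdet μ').1).2.2
  have hRbd : ∀ μ' : P, ∀ t s : ℝ, 0 ≤ s → s ≤ t →
      ‖R μ' t s‖ ≤ M * Real.exp (om * (t - s)) := fun μ' => (hdet μ').2.1
  have hRfwd : ∀ μ' : P, ∀ s : ℝ, 0 ≤ s → ∀ v : V,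
      Filter.Tendsto (fun h : ℝ => h⁻¹ • (R μ' (s + h) s (iota v) - iota v))
        (𝓝[>] (0:ℝ)) (𝓝 (A μ' s v)) := fun μ' => (hdet μ').2.2.1

  intro u0 μ μn hμn T hT ε hε
  -- constants
  set CE : ℝ := M * Real.exp (|om| * T) with hCEdef
  set CV : ℝ := MV * Real.exp (|omV| * T) with hCVdef
  have hexpom : (1:ℝ) ≤ Real.exp (|om| * T) := Real.one_le_exp (by positivity)
  have hCE1 : 1 ≤ CE := le_trans hM (le_mul_of_one_le_right (by linarith) hexpom)
  have hCE0 : 0 < CE := by linarith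
  have hCV0 : 0 < CV := by
    have : (1:ℝ) ≤ Real.exp (|omV| * T) := Real.one_le_exp (by positivity)
    have := le_trans hMV (le_mul_of_one_le_right (by linarith) this)
    linarith
  -- uniform bound on R
  have hRb : ∀ ν : P, ∀ t s : ℝ, 0 ≤ s → s ≤ t → t ≤ T → ‖R ν t s‖ ≤ CE := by
    intro ν t s h0 hst htT
    refine le_trans (hRbd ν t s h0 hst) ?_
    refine mul_le_mul_of_nonneg_left (Real.exp_le_exp.2 ?_) (by linarith)
    calc om * (t - s) ≤ |om| * (t - s) :=
          mul_le_mul_of_nonneg_right (le_abs_self om) (by linarith)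
      _ ≤ |om| * T := mul_le_mul_of_nonneg_left (by linarith) (abs_nonneg om)
  -- extended generator families (continuous on all of ℝ)
  set Atil : P → ℝ → (V →L[ℝ] E) := fun ν σ => A ν (max σ 0) with hAtdef
  have hAtilc : ∀ ν, Continuous (Atil ν) := fun ν =>
    (hcontA ν).comp_continuous (continuous_id.max continuous_const)
      (fun σ => Set.mem_Ici.2 (le_max_right _ _))
  have hAtile : ∀ ν : P, ∀ σ : ℝ, 0 ≤ σ → Atil ν σ = A ν σ := fun ν σ h => by
    simp [hAtdef, max_eq_left h]
  -- density
  have hεq : 0 < ε / (4 * CE) := by positivity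
  obtain ⟨v, hv⟩ := hdense.exists_dist_lt u0 hεq
  rw [dist_eq_norm] at hv
  set K : ℝ := CV * ‖v‖ with hKdef
  have hK0 : 0 ≤ K := by positivity
  -- choice of ε', δ, k
  set Dq : ℝ := CE * K * T + CE * K + 1 with hDq
  have hDq0 : 0 < Dq := by positivity
  set ε' : ℝ := ε / (8 * Dq) with hε'
  have hε'0 : 0 < ε' := by positivity
  -- modulus of continuity of Atil μ on [0, T]
  obtain ⟨δ, hδ0, hδ⟩ : ∃ δ > (0:ℝ), ∀ x ∈ Icc (0:ℝ) T, ∀ y ∈ Icc (0:ℝ) T,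
      dist x y ≤ δ → dist (Atil μ x) (Atil μ y) ≤ ε' := by
    have huc : UniformContinuousOn (Atil μ) (Icc 0 T) :=
      isCompact_Icc.uniformContinuousOn_of_continuous (hAtilc μ).continuousOn
    rw [Metric.uniformContinuousOn_iff_le] at huc
    obtain ⟨δ, hδ0, hδ⟩ := huc ε' hε'0
    exact ⟨δ, hδ0, fun x hx y hy hxy => hδ x hx y hy hxy⟩
  set k : ℕ := ⌈T / δ⌉₊ with hk
  have hk1 : 1 ≤ k := Nat.one_le_iff_ne_zero.2 (by
    simp only [hk, ne_eq, Nat.ceil_eq_zero, not_le]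
    positivity)
  have hkR : (0:ℝ) < k := by exact_mod_cast hk1
  have hTkδ : T / k ≤ δ := by
    rw [div_le_iff₀ hkR]
    calc T = (T / δ) * δ := by field_simp
      _ ≤ k * δ := mul_le_mul_of_nonneg_right (Nat.le_ceil _) (le_of_lt hδ0)
      _ = δ * k := mul_comm _ _
  -- the L¹-convergence
  have hJ : Tendsto (fun n => ∫ r in (0:ℝ)..T, ‖A (μn n) r - A μ r‖) atTop (𝓝 0) :=
    (hconv μ T hT).comp hμn
  have hJev : ∀ᶠ n in atTop, (∫ r in (0:ℝ)..T, ‖A (μn n) r - A μ r‖) < ε' :=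
    hJ (Iio_mem_nhds hε'0)
  rw [eventually_atTop] at hJev
  obtain ⟨N, hN⟩ := hJev
  refine ⟨N, fun n hn t s hs hst htT => ?_⟩
  have ht0 : 0 ≤ t := le_trans hs hst
  -- the partition of [s, t] and the chain of vectors
  set Δ : ℝ := (t - s) / k with hΔdef
  have hΔ0 : 0 ≤ Δ := div_nonneg (by linarith) hkR.le
  have hΔδ : Δ ≤ δ := le_trans ((div_le_div_iff_of_pos_right hkR).2 (by linarith)) hTkδ
  set tseq : ℕ → ℝ := fun j => s + j * Δ with htsdef
  have htseq0 : ∀ j, 0 ≤ tseq j := fun j => by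
    have : (0:ℝ) ≤ j * Δ := by positivity
    simp only [htsdef]; linarith
  have htseqmono : ∀ i j : ℕ, i ≤ j → tseq i ≤ tseq j := fun i j hij => by
    simp only [htsdef]
    have : (i:ℝ) * Δ ≤ j * Δ :=
      mul_le_mul_of_nonneg_right (by exact_mod_cast hij) hΔ0
    linarith
  have htseqk : tseq k = t := by
    simp only [htsdef, hΔdef]
    field_simp
    ring
  have htseqle : ∀ i : ℕ, i ≤ k → tseq i ≤ t := fun i hi =>
    htseqk ▸ htseqmono i k hi
  have hstep : ∀ i : ℕ, tseq (i + 1) - tseq i = Δ := fun i => by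
    simp only [htsdef]; push_cast; ring
  set w : ℕ → V := fun i => prodOps (SV μ) tseq (fun _ => Δ) i v with hwdef
  have hw0 : w 0 = v := rfl
  have hwsucc : ∀ i : ℕ, w (i + 1) = SV μ (tseq i) Δ (w i) := fun i => rfl
  -- V-norm bound along the chain
  have hwnorm : ∀ i : ℕ, i < k → ∀ σ' ∈ Icc (tseq i) (tseq (i + 1)),
      ‖SV μ (tseq i) (σ' - tseq i) (w i)‖ ≤ K := by
    intro i hi σ' hσ'
    set sseq : ℕ → ℝ := fun j => if j < i then Δ else σ' - tseq i with hssdef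
    have hss0 : ∀ j, 0 ≤ sseq j := fun j => by
      simp only [hssdef]
      split
      · exact hΔ0
      · linarith [hσ'.1]
    have heqw : SV μ (tseq i) (σ' - tseq i) (w i) = prodOps (SV μ) tseq sseq (i + 1) v := by
      have e1 : sseq i = σ' - tseq i := by simp [hssdef]
      have e2 : prodOps (SV μ) tseq sseq i = prodOps (SV μ) tseq (fun _ => Δ) i :=
        prodOps_congr _ _ _ _ i (fun j hj => by simp [hssdef, hj])
      have h1 : prodOps (SV μ) tseq sseq (i + 1) =
          (SV μ (tseq i) (σ' - tseq i)).comp (prodOps (SV μ) tseq (fun _ => Δ) i) := by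
        calc prodOps (SV μ) tseq sseq (i + 1)
            = (SV μ (tseq i) (sseq i)).comp (prodOps (SV μ) tseq sseq i) := rfl
          _ = _ := by rw [e1, e2]
      rw [h1]; rfl
    have hsum : ∑ j ∈ Finset.range (i + 1), sseq j = σ' - s := by
      rw [Finset.sum_range_succ]
      have h2 : ∑ j ∈ Finset.range i, sseq j = i * Δ := by
        have hc : ∀ j ∈ Finset.range i, sseq j = Δ := fun j hj => by
          simp [hssdef, Finset.mem_range.1 hj]
        rw [Finset.sum_congr rfl hc, Finset.sum_const, Finset.card_range, nsmul_eq_mul]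
      rw [h2]
      simp only [hssdef, htsdef]
      have : ¬ i < i := lt_irrefl i
      simp [this]
      ring
    have hnorm := hstableV μ (i + 1) tseq sseq htseq0 htseqmono hss0
    rw [hsum] at hnorm
    have htseqs : tseq 0 = s := by simp [htsdef]
    have h3 : s ≤ tseq i := htseqs ▸ htseqmono 0 i (Nat.zero_le i)
    have hσ's : 0 ≤ σ' - s := by linarith [hσ'.1]
    have hσ'T : σ' - s ≤ T := by
      have h4 : σ' ≤ t := le_trans hσ'.2 (htseqle (i+1) (Nat.succ_le_of_lt hi))
      linarith
    have hexp2 : Real.exp (omV * (σ' - s)) ≤ Real.exp (|omV| * T) := by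
      apply Real.exp_le_exp.2
      calc omV * (σ' - s) ≤ |omV| * (σ' - s) :=
            mul_le_mul_of_nonneg_right (le_abs_self omV) hσ's
        _ ≤ |omV| * T := mul_le_mul_of_nonneg_left hσ'T (abs_nonneg omV)
    calc ‖SV μ (tseq i) (σ' - tseq i) (w i)‖
        = ‖prodOps (SV μ) tseq sseq (i + 1) v‖ := by rw [heqw]
      _ ≤ ‖prodOps (SV μ) tseq sseq (i + 1)‖ * ‖v‖ := ContinuousLinearMap.le_opNorm _ _
      _ ≤ (MV * Real.exp (omV * (σ' - s))) * ‖v‖ :=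
          mul_le_mul_of_nonneg_right hnorm (norm_nonneg v)
      _ ≤ (MV * Real.exp (|omV| * T)) * ‖v‖ := by
          apply mul_le_mul_of_nonneg_right ?_ (norm_nonneg v)
          exact mul_le_mul_of_nonneg_left hexp2 (by linarith)
      _ = K := by rw [hKdef, hCVdef]
  have htseqs : tseq 0 = s := by simp [htsdef]
  -- integrand for the comparison
  set gfun : P → ℝ → ℝ := fun ν σ => CE * ((ε' + ‖Atil μ σ - Atil ν σ‖) * K) with hgf
  have hgfc : ∀ ν, Continuous (gfun ν) := fun ν => by
    apply continuous_const.mul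
    exact ((continuous_const.add ((hAtilc μ).sub (hAtilc ν)).norm).mul continuous_const)
  -- the chain estimate
  have CHAIN : ∀ ν : P, ‖R ν t s (iota v) - iota (w k)‖ ≤ ∫ σ in s..t, gfun ν σ := by
    intro ν
    have hterm : ∀ i : ℕ, i < k →
        ‖R ν t (tseq (i + 1)) (iota (w (i + 1))) - R ν t (tseq i) (iota (w i))‖ ≤
        ∫ σ in (tseq i)..(tseq (i + 1)), gfun ν σ := by
      intro i hi
      have h1k : i + 1 ≤ k := Nat.succ_le_of_lt hi
      have hai : 0 ≤ tseq i := htseq0 i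
      have habi : tseq i ≤ tseq (i + 1) := htseqmono i (i + 1) (Nat.le_succ i)
      have hbti : tseq (i + 1) ≤ t := htseqle (i + 1) h1k
      have hfwd' : ∀ s' : ℝ, 0 ≤ s' → ∀ v' : V,
          Tendsto (fun h : ℝ => h⁻¹ • (R ν (s' + h) s' (iota v') - iota v'))
            (𝓝[>] (0:ℝ)) (𝓝 (Atil ν s' v')) := fun s' hs' v' => by
        rw [hAtile ν s' hs']; exact hRfwd ν s' hs' v'
      have hgen' : ∀ v' : V,
          Tendsto (fun h : ℝ => h⁻¹ • (S μ (tseq i) h (iota v') - iota v'))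
            (𝓝[>] (0:ℝ)) (𝓝 (Atil μ (tseq i) v')) := fun v' => by
        rw [hAtile μ (tseq i) hai]; exact hgenV μ (tseq i) hai v'
      have key := key_interval iota (Atil ν) (Atil μ) (hAtilc ν) (hAtilc μ)
        (S μ (tseq i)) (SV μ (tseq i)) (R ν) hCE0.le
        hai habi hbti (hRcomp ν) (hRcont ν)
        (fun σ h0 hσt => hRb ν t σ h0 hσt htT)
        hfwd' hgen' (hsemE μ (tseq i) hai).2.2 (hsemE μ (tseq i) hai).2.1
        (hsemV μ (tseq i) hai) (fun h hh v' => hcompat μ (tseq i) h hai hh v')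
        (w i) (hwnorm i hi)
      rw [hstep i] at key
      rw [← hwsucc i] at key
      refine le_trans key ?_
      apply intervalIntegral.integral_mono_on habi
        (Continuous.intervalIntegrable (by
          apply continuous_const.mul
          exact (((continuous_const.sub (hAtilc μ)).norm.add
            (((hAtilc μ).sub (hAtilc ν)).norm)).mul continuous_const)) _ _)
        ((hgfc ν).intervalIntegrable _ _)
      intro σ hσ
      have hσ0 : 0 ≤ σ := le_trans hai hσ.1
      have hσT : σ ≤ T := le_trans (le_trans hσ.2 hbti) htT
      have hmod : ‖Atil μ (tseq i) - Atil μ σ‖ ≤ ε' := by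
        have := hδ (tseq i) ⟨hai, le_trans (le_trans habi hbti) htT⟩ σ ⟨hσ0, hσT⟩ (by
          rw [Real.dist_eq, abs_le]
          constructor
          · have := hσ.1; have := hstep i; linarith [hσ.2, hΔδ]
          · linarith [hσ.1, hδ0])
        rw [dist_eq_norm] at this
        exact this
      simp only [hgf]
      have h5 : ‖Atil μ (tseq i) - Atil μ σ‖ + ‖Atil μ σ - Atil ν σ‖ ≤
          ε' + ‖Atil μ σ - Atil ν σ‖ := by linarith
      refine mul_le_mul_of_nonneg_left (mul_le_mul_of_nonneg_right h5 hK0) hCE0.le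
    -- telescoping
    have htel := dist_le_range_sum_dist (fun i => R ν t (tseq i) (iota (w i))) k
    have hF0 : R ν t (tseq 0) (iota (w 0)) = R ν t s (iota v) := by rw [htseqs, hw0]
    have hFk : R ν t (tseq k) (iota (w k)) = iota (w k) := by
      rw [htseqk, hRid ν t ht0]; rfl
    rw [hF0, hFk] at htel
    rw [← dist_eq_norm]
    refine le_trans htel ?_
    have hsum2 : ∑ i ∈ Finset.range k,
        (∫ σ in (tseq i)..(tseq (i + 1)), gfun ν σ) = ∫ σ in s..t, gfun ν σ := by
      rw [intervalIntegral.sum_integral_adjacent_intervals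
        (fun l _ => (hgfc ν).intervalIntegrable _ _), htseqs, htseqk]
    rw [← hsum2]
    apply Finset.sum_le_sum
    intro i hi
    rw [dist_eq_norm, norm_sub_rev]
    exact hterm i (Finset.mem_range.1 hi)
  -- bounding the integrals
  have hIle : ∀ ν : P, (∫ σ in s..t, gfun ν σ) ≤ ∫ σ in (0:ℝ)..T, gfun ν σ := fun ν =>
    intervalIntegral.integral_mono_interval hs hst htT
      (Eventually.of_forall fun σ => by
        simp only [hgf]; positivity)
      ((hgfc ν).intervalIntegrable _ _)
  have hIval : ∀ ν : P, (∫ σ in (0:ℝ)..T, gfun ν σ) =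
      CE * K * ε' * T + CE * K * ∫ σ in (0:ℝ)..T, ‖Atil μ σ - Atil ν σ‖ := by
    intro ν
    have hfe : (fun σ => gfun ν σ) =
        fun σ => CE * K * ε' + CE * K * ‖Atil μ σ - Atil ν σ‖ := by
      funext σ; simp only [hgf]; ring
    rw [hfe, intervalIntegral.integral_add (intervalIntegrable_const)
      (Continuous.intervalIntegrable (u := fun σ => CE * K * ‖Atil μ σ - Atil ν σ‖) (continuous_const.mul
        ((hAtilc μ).sub (hAtilc ν)).norm) _ _),
      intervalIntegral.integral_const, intervalIntegral.integral_const_mul]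
    simp [smul_eq_mul]; ring
  -- value for ν = μ and ν = μn n
  have hJμ : (∫ σ in (0:ℝ)..T, ‖Atil μ σ - Atil μ σ‖) = 0 := by simp
  have hJn : (∫ σ in (0:ℝ)..T, ‖Atil μ σ - Atil (μn n) σ‖) =
      ∫ r in (0:ℝ)..T, ‖A (μn n) r - A μ r‖ := by
    apply intervalIntegral.integral_congr
    intro σ hσ
    rw [uIcc_of_le hT.le] at hσ
    show ‖Atil μ σ - Atil (μn n) σ‖ = ‖A (μn n) σ - A μ σ‖
    rw [hAtile μ σ hσ.1, hAtile (μn n) σ hσ.1, norm_sub_rev]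
  have hJnlt : (∫ r in (0:ℝ)..T, ‖A (μn n) r - A μ r‖) < ε' := hN n hn
  -- assemble the middle bound
  have hCK0 : 0 ≤ CE * K := mul_nonneg hCE0.le hK0
  have hCKT0 : 0 ≤ CE * K * T := mul_nonneg hCK0 hT.le
  have hCKT : CE * K * T ≤ Dq := by rw [hDq]; linarith
  have hCK : CE * K ≤ Dq := by rw [hDq]; linarith
  have hDqε' : Dq * ε' = ε / 8 := by
    rw [hε']; field_simp
  have hmid1 : ‖R (μn n) t s (iota v) - iota (w k)‖ ≤ ε / 8 + ε / 8 := by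
    refine le_trans (CHAIN (μn n)) (le_trans (hIle (μn n)) ?_)
    rw [hIval (μn n), hJn]
    have b1 : CE * K * ε' * T ≤ ε / 8 := by
      rw [← hDqε']
      calc CE * K * ε' * T = (CE * K * T) * ε' := by ring
        _ ≤ Dq * ε' := mul_le_mul_of_nonneg_right hCKT hε'0.le
    have b2 : CE * K * (∫ r in (0:ℝ)..T, ‖A (μn n) r - A μ r‖) ≤ ε / 8 := by
      rw [← hDqε']
      have hJnn : (0:ℝ) ≤ ∫ r in (0:ℝ)..T, ‖A (μn n) r - A μ r‖ :=
        intervalIntegral.integral_nonneg hT.le (fun σ _ => norm_nonneg _)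
      calc CE * K * (∫ r in (0:ℝ)..T, ‖A (μn n) r - A μ r‖)
          ≤ Dq * (∫ r in (0:ℝ)..T, ‖A (μn n) r - A μ r‖) :=
            mul_le_mul_of_nonneg_right hCK hJnn
        _ ≤ Dq * ε' := mul_le_mul_of_nonneg_left hJnlt.le hDq0.le
    linarith
  have hmid2 : ‖R μ t s (iota v) - iota (w k)‖ ≤ ε / 8 := by
    refine le_trans (CHAIN μ) (le_trans (hIle μ) ?_)
    rw [hIval μ, hJμ]
    have b1 : CE * K * ε' * T ≤ ε / 8 := by
      rw [← hDqε']
      calc CE * K * ε' * T = (CE * K * T) * ε' := by ring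
        _ ≤ Dq * ε' := mul_le_mul_of_nonneg_right hCKT hε'0.le
    linarith
  have hmid : ‖R (μn n) t s (iota v) - R μ t s (iota v)‖ ≤ 3 * ε / 8 := by
    calc ‖R (μn n) t s (iota v) - R μ t s (iota v)‖
        ≤ ‖R (μn n) t s (iota v) - iota (w k)‖ + ‖iota (w k) - R μ t s (iota v)‖ :=
          norm_sub_le_norm_sub_add_norm_sub _ _ _
      _ ≤ (ε / 8 + ε / 8) + ε / 8 := by
          rw [norm_sub_rev (iota (w k))]
          exact add_le_add hmid1 hmid2
      _ = 3 * ε / 8 := by ring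
  -- density argument
  have hdecomp : R (μn n) t s u0 - R μ t s u0 =
      R (μn n) t s (u0 - iota v) + (R (μn n) t s (iota v) - R μ t s (iota v)) +
      R μ t s (iota v - u0) := by
    simp only [map_sub]
    abel
  have hend : ∀ ν : P, ‖R ν t s (u0 - iota v)‖ ≤ ε / 4 := by
    intro ν
    calc ‖R ν t s (u0 - iota v)‖ ≤ ‖R ν t s‖ * ‖u0 - iota v‖ :=
          ContinuousLinearMap.le_opNorm _ _
      _ ≤ CE * ‖u0 - iota v‖ :=
          mul_le_mul_of_nonneg_right (hRb ν t s hs hst htT) (norm_nonneg _)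
      _ ≤ CE * (ε / (4 * CE)) :=
          mul_le_mul_of_nonneg_left hv.le hCE0.le
      _ = ε / 4 := by field_simp
  calc ‖R (μn n) t s u0 - R μ t s u0‖
      ≤ ‖R (μn n) t s (u0 - iota v)‖ + ‖R (μn n) t s (iota v) - R μ t s (iota v)‖ +
        ‖R μ t s (iota v - u0)‖ := by
        rw [hdecomp]
        exact le_trans (norm_add_le _ _) (add_le_add_left (norm_add_le _ _) _)
    _ ≤ ε / 4 + 3 * ε / 8 + ε / 4 := by
        refine add_le_add (add_le_add (hend (μn n)) hmid) ?_
        rw [show iota v - u0 = -(u0 - iota v) by abel, map_neg, norm_neg]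
        exact hend μ
    _ ≤ ε := by linarith
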